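/- arXiv:1602.00327 — 2 statements merged into one kernel-verified Lean document; each statement's English description precedes it below -/
import Mathlib

section
/- Let S be a numerical semigroup with multiplicity e. Suppose x = Σ_{i=2}^v a_i n_i ∈ C_k is a maximal representation with all a_i ≥ 1, Σ a_i = k, and |Supp(x)| = q distinct generators. Then for 2 ≤ h < k: if q ≥ h+1 then |C_h| ≥ q, and if q ≤ h then |C_h| ≥ q. -/
open Set

/-- A numerical semigroup: a cofinite submonoid of ℕ. -/
def IsNumSgp (S : Set ℕ) : Prop :=
  0 ∈ S ∧ (∀ a ∈ S, ∀ b ∈ S, a + b ∈ S) ∧ Sᶜ.Finite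

/-- The maximal ideal `M = S \ {0}`. -/
def MS (S : Set ℕ) : Set ℕ := S \ {0}

/-- The multiplicity `e` of `S`, the smallest nonzero element. -/
noncomputable def mult (S : Set ℕ) : ℕ := sInf (MS S)

/-- `nM S h` is the set of sums of `h` elements of `M = S \ {0}` (with `nM S 0 = {0}`). -/
def nM (S : Set ℕ) : ℕ → Set ℕ
  | 0 => {0}
  | k + 1 => {x | ∃ a ∈ MS S, ∃ b ∈ nM S k, x = a + b}

/-- The order of `s`: the largest `h` with `s ∈ hM`. -/
noncomputable def ordS (S : Set ℕ) (s : ℕ) : ℕ := sSup {h | s ∈ nM S h}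

/-- The Apéry set of `S` with respect to the multiplicity `e`:
elements `s ∈ S` with `s - e ∉ S`. -/
def Ap (S : Set ℕ) : Set ℕ := {s ∈ S | ∀ t ∈ S, t + mult S ≠ s}

/-- Elements of the Apéry set of order `k`. -/
def ApK (S : Set ℕ) (k : ℕ) : Set ℕ := {s ∈ Ap S | ordS S s = k}

/-- `C_k = {s ∈ S : ord s = k and s - e ∉ (k-1)M}`. -/
def CK (S : Set ℕ) (k : ℕ) : Set ℕ :=
  {s ∈ S | ordS S s = k ∧ ∀ t ∈ nM S (k - 1), t + mult S ≠ s}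

/-- `D_k = {s ∈ S : ord s = k-1 and ord (s+e) > k}`. -/
def DK (S : Set ℕ) (k : ℕ) : Set ℕ :=
  {s ∈ S | ordS S s = k - 1 ∧ k < ordS S (s + mult S)}

/-- The Hilbert function of `R = k[[S]]`: `H(0) = 1`, `H(n) = |nM \ (n+1)M|`. -/
noncomputable def HF (S : Set ℕ) (n : ℕ) : ℕ := (nM S n \ nM S (n + 1)).ncard

/-- The set of minimal generators of `S`. -/
def MinGens (S : Set ℕ) : Set ℕ :=
  MS S \ {x | ∃ a ∈ MS S, ∃ b ∈ MS S, x = a + b}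

/-- `a` is a maximal representation of `s`: a finitely supported coefficient
function on the minimal generators with `Σ aⱼ nⱼ = s` and `Σ aⱼ = ord s`. -/
def IsMaxRep (S : Set ℕ) (s : ℕ) (a : ℕ →₀ ℕ) : Prop :=
  (↑a.support : Set ℕ) ⊆ MinGens S ∧
  (a.sum fun n c => c * n) = s ∧
  (a.sum fun _ c => c) = ordS S s

/-- `|Supp(s)|`: the maximal number of distinct minimal generators appearing
in a maximal representation of `s`. -/
noncomputable def SuppCard (S : Set ℕ) (s : ℕ) : ℕ :=
  sSup {q | ∃ a : ℕ →₀ ℕ, IsMaxRep S s a ∧ a.support.card = q}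

/-- The Frobenius number of `S`. -/
noncomputable def Frob (S : Set ℕ) : ℕ := sSup Sᶜ

section Base
variable {S : Set ℕ}

lemma MS_add (hS : IsNumSgp S) {a b : ℕ} (ha : a ∈ MS S) (hb : b ∈ MS S) :
    a + b ∈ MS S := by
  refine ⟨hS.2.1 a ha.1 b hb.1, ?_⟩
  have := ha.2; have := hb.2
  simp only [Set.mem_singleton_iff] at *
  omega

lemma mult_mem (hS : IsNumSgp S) : mult S ∈ MS S := by
  have hne : (MS S).Nonempty := by
    have hinf : S.Infinite := by
      have := hS.2.2.infinite_compl
      simpa using this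
    obtain ⟨a, haS, hapos⟩ := hinf.exists_gt 0
    exact ⟨a, haS, by simpa using hapos.ne'⟩
  exact Nat.sInf_mem hne

lemma mult_pos (hS : IsNumSgp S) : 0 < mult S := by
  have := (mult_mem hS).2
  simp only [Set.mem_singleton_iff] at this
  omega

lemma mult_le (hS : IsNumSgp S) {x : ℕ} (hx : x ∈ MS S) : mult S ≤ x :=
  Nat.sInf_le hx

lemma nM_subset (hS : IsNumSgp S) (h : ℕ) : nM S h ⊆ S := by
  induction h with
  | zero => intro x hx; simp only [nM, Set.mem_singleton_iff] at hx; subst hx; exact hS.1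
  | succ n ih =>
    rintro x ⟨a, ha, b, hb, rfl⟩
    exact hS.2.1 a ha.1 b (ih hb)

lemma nM_ge (hS : IsNumSgp S) {h x : ℕ} (hx : x ∈ nM S h) : h * mult S ≤ x := by
  induction h generalizing x with
  | zero => simp
  | succ n ih =>
    obtain ⟨a, ha, b, hb, rfl⟩ := hx
    have h1 : mult S ≤ a := mult_le hS ha
    have h2 := ih hb
    nlinarith

lemma nM_add (hS : IsNumSgp S) {g h x y : ℕ} (hx : x ∈ nM S g) (hy : y ∈ nM S h) :
    x + y ∈ nM S (g + h) := by
  induction g generalizing x with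
  | zero => simp only [nM, Set.mem_singleton_iff] at hx; subst hx; simpa using hy
  | succ n ih =>
    obtain ⟨a, ha, b, hb, rfl⟩ := hx
    have h1 : n + 1 + h = (n + h) + 1 := by omega
    rw [h1]
    exact ⟨a, ha, b + y, ih hb, by ring⟩

lemma mem_nM_one {x : ℕ} (hx : x ∈ MS S) : x ∈ nM S 1 :=
  ⟨x, hx, 0, rfl, by ring⟩

lemma mul_mem_nM (hS : IsNumSgp S) {n : ℕ} (hn : n ∈ MS S) (c : ℕ) :
    c * n ∈ nM S c := by
  induction c with
  | zero => simp [nM]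
  | succ m ih => exact ⟨n, hn, m * n, ih, by ring⟩

lemma bddAbove_ordset (hS : IsNumSgp S) (s : ℕ) : BddAbove {h | s ∈ nM S h} := by
  refine ⟨s, fun j hj => ?_⟩
  have := nM_ge hS hj
  have := mult_pos hS
  nlinarith

lemma le_ord (hS : IsNumSgp S) {s h : ℕ} (hs : s ∈ nM S h) : h ≤ ordS S s :=
  le_csSup (bddAbove_ordset hS s) hs

lemma le_of_ord_eq (hS : IsNumSgp S) {s h j : ℕ} (hord : ordS S s = h)
    (hj : s ∈ nM S j) : j ≤ h := hord ▸ le_ord hS hj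

end Base
section FS
variable {S : Set ℕ}

lemma finset_sum_mem_nM (hS : IsNumSgp S) (t : Finset ℕ) (f : ℕ → ℕ)
    (ht : ∀ n ∈ t, n ∈ MS S) :
    (∑ n ∈ t, f n * n) ∈ nM S (∑ n ∈ t, f n) := by
  classical
  induction t using Finset.induction with
  | empty => simp [nM]
  | @insert n t hn ih =>
    rw [Finset.sum_insert hn, Finset.sum_insert hn]
    exact nM_add hS (mul_mem_nM hS (ht n (Finset.mem_insert_self n t)) (f n))
      (ih fun m hm => ht m (Finset.mem_insert_of_mem hm))

lemma finsupp_mem_nM (hS : IsNumSgp S) (b : ℕ →₀ ℕ)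
    (hb : ∀ n ∈ b.support, n ∈ MS S) :
    (b.sum fun n c => c * n) ∈ nM S (b.sum fun _ c => c) :=
  finset_sum_mem_nM hS b.support _ hb

/-- splitting of a finsupp along a pointwise-dominated one -/
lemma finsupp_split (a b : ℕ →₀ ℕ) (hba : ∀ n, b n ≤ a n) :
    b + (a - b) = a := by
  ext n
  simp only [Finsupp.add_apply, Finsupp.tsub_apply]
  have := hba n
  omega

lemma coeffsum_add (b d : ℕ →₀ ℕ) :
    ((b + d).sum fun _ c => c) = (b.sum fun _ c => c) + (d.sum fun _ c => c) :=
  Finsupp.sum_add_index' (fun _ => rfl) (fun _ _ _ => rfl)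

lemma wsum_add (b d : ℕ →₀ ℕ) :
    ((b + d).sum fun n c => c * n) = (b.sum fun n c => c * n) + (d.sum fun n c => c * n) :=
  Finsupp.sum_add_index' (fun _ => by simp) (fun _ _ _ => by ring)

end FS
section Key
variable {S : Set ℕ}

lemma mingens_subset_MS : MinGens S ⊆ MS S := fun _ h => h.1

lemma sub_mem_CK (hS : IsNumSgp S) {k h x : ℕ} (hx : x ∈ CK S k)
    {a b : ℕ →₀ ℕ} (ha : IsMaxRep S x a) (hba : ∀ n, b n ≤ a n)
    (hbs : (b.sum fun _ c => c) = h) (hh : 1 ≤ h) (hhk : h ≤ k) :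
    (b.sum fun n c => c * n) ∈ CK S h := by
  classical
  obtain ⟨hxS, hxord, hxC⟩ := hx
  obtain ⟨hasupp, haw, hac⟩ := ha
  have hak : (a.sum fun _ c => c) = k := by rw [hac, hxord]
  have hsuppMS : ∀ (f : ℕ →₀ ℕ), (∀ n, f n ≤ a n) → ∀ n ∈ f.support, n ∈ MS S := by
    intro f hf n hn
    have h1 : n ∈ a.support := by
      rw [Finsupp.mem_support_iff] at hn ⊢
      have := hf n; omega
    exact mingens_subset_MS (hasupp h1)
  set y := b.sum fun n c => c * n with hy
  set d := a - b with hd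
  have hbd : b + d = a := finsupp_split a b hba
  have hdn : ∀ n, d n ≤ a n := by
    intro n; rw [hd, Finsupp.tsub_apply]; omega
  have hdc : (d.sum fun _ c => c) = k - h := by
    have := coeffsum_add b d
    rw [hbd, hak, hbs] at this
    omega
  have hxyz : y + (d.sum fun n c => c * n) = x := by
    have := wsum_add b d
    rw [hbd, haw] at this
    omega
  have hz : (d.sum fun n c => c * n) ∈ nM S (k - h) := by
    rw [← hdc]; exact finsupp_mem_nM hS d (hsuppMS d hdn)
  have hyh : y ∈ nM S h := by
    rw [← hbs]; exact finsupp_mem_nM hS b (hsuppMS b hba)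
  have hyS : y ∈ S := nM_subset hS h hyh
  have hord : ordS S y = h := by
    refine le_antisymm ?_ (le_ord hS hyh)
    refine csSup_le ⟨h, hyh⟩ ?_
    intro j hj
    have hxmem : x ∈ nM S (j + (k - h)) := hxyz ▸ nM_add hS hj hz
    have := le_of_ord_eq hS hxord hxmem
    omega
  refine ⟨hyS, hord, ?_⟩
  intro t ht heq
  have htz : t + (d.sum fun n c => c * n) ∈ nM S (k - 1) := by
    have h1 : (h - 1) + (k - h) = k - 1 := by omega
    have := nM_add hS ht hz
    rwa [h1] at this
  exact hxC _ htz (by omega)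

end Key
section Fin
variable {S : Set ℕ}

lemma CK_finite (hS : IsNumSgp S) (h : ℕ) : (CK S h).Finite := by
  apply Set.Finite.subset (Set.finite_Iic ((h + 1) * mult S + Frob S))
  intro y hy
  obtain ⟨hyS, hyord, -⟩ := hy
  simp only [Set.mem_Iic]
  by_contra hbig
  push_neg at hbig
  set e := mult S with he
  set r := y - (h + 1) * e with hr
  have hrF : Frob S < r := by omega
  have hrS : r ∈ S := by
    by_contra hrS
    have : r ≤ Frob S := le_csSup hS.2.2.bddAbove hrS
    omega
  have hrM : r ∈ MS S := ⟨hrS, by simp only [Set.mem_singleton_iff]; omega⟩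
  have hyeq : y = h * e + (e + r) := by
    have h1 : (h + 1) * e = h * e + e := by ring
    omega
  have hymem : y ∈ nM S (h + 1) := by
    rw [hyeq]
    exact nM_add hS (mul_mem_nM hS (mult_mem hS) h) (mem_nM_one (MS_add hS (mult_mem hS) hrM))
  have := le_ord hS hymem
  omega

end Fin
section Ind

/-- indicator finsupp with value 1 on a finset -/
def ind (t : Finset ℕ) : ℕ →₀ ℕ :=
  ⟨t, fun n => if n ∈ t then 1 else 0, by intro a; simp⟩

lemma ind_apply (t : Finset ℕ) (n : ℕ) : ind t n = if n ∈ t then 1 else 0 := rfl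

lemma ind_support (t : Finset ℕ) : (ind t).support = t := rfl

lemma ind_coeffsum (t : Finset ℕ) : ((ind t).sum fun _ c => c) = t.card := by
  rw [Finsupp.sum, ind_support]
  rw [Finset.sum_congr rfl (fun n hn => by rw [ind_apply, if_pos hn])]
  simp

lemma ind_wsum (t : Finset ℕ) : ((ind t).sum fun n c => c * n) = ∑ n ∈ t, n := by
  rw [Finsupp.sum, ind_support]
  exact Finset.sum_congr rfl (fun n hn => by rw [ind_apply, if_pos hn]; ring)

lemma exists_le_sum (d : ℕ →₀ ℕ) (m : ℕ) (hm : m ≤ d.sum fun _ c => c) :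
    ∃ c : ℕ →₀ ℕ, (∀ n, c n ≤ d n) ∧ (c.sum fun _ c => c) = m := by
  classical
  induction m with
  | zero => exact ⟨0, fun n => Nat.zero_le _, by simp⟩
  | succ m ih =>
    obtain ⟨c, hc, hcm⟩ := ih (by omega)
    have hne : ∃ n, c n < d n := by
      by_contra hno
      push_neg at hno
      have : c = d := by
        ext n; exact le_antisymm (hc n) (hno n)
      rw [this] at hcm
      omega
    obtain ⟨n, hn⟩ := hne
    refine ⟨c + Finsupp.single n 1, ?_, ?_⟩
    · intro m'
      simp only [Finsupp.add_apply, Finsupp.single_apply]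
      by_cases hm' : n = m'
      · subst hm'; simpa using hn
      · simp [hm', hc m']
    · rw [coeffsum_add, hcm, Finsupp.sum_single_index rfl]

end Ind
section Case1
variable {S : Set ℕ}

lemma final_count (hS : IsNumSgp S) (h : ℕ) (Y : Finset ℕ)
    (hY : ∀ y ∈ Y, y ∈ CK S h) : Y.card ≤ (CK S h).ncard := by
  have hsub : (↑Y : Set ℕ) ⊆ CK S h := hY
  have := Set.ncard_le_ncard hsub (CK_finite hS h)
  rwa [Set.ncard_coe_finset] at this

lemma case_small (hS : IsNumSgp S) {k q h x : ℕ} (hx : x ∈ CK S k)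
    {a : ℕ →₀ ℕ} (ha : IsMaxRep S x a) (hsum : (a.sum fun _ c => c) = k)
    (hq : a.support.card = q) (h2 : 2 ≤ h) (hhk : h < k)
    (hqh : q ≤ h + 1) (hq1 : 1 ≤ q) : q ≤ (CK S h).ncard := by
  classical
  set s := a.support with hs
  have hs1 : ∀ n ∈ s, 1 ≤ a n := fun n hn => by
    have := Finsupp.mem_support_iff.mp hn; omega
  have hind_le : ∀ n, ind s n ≤ a n := by
    intro n
    rw [ind_apply]
    by_cases hn : n ∈ s
    · rw [if_pos hn]; exact hs1 n hn
    · simp [hn]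
  set d := a - ind s with hd
  have hdsum : (d.sum fun _ c => c) = k - q := by
    have hsplit : ind s + d = a := finsupp_split a (ind s) hind_le
    have := coeffsum_add (ind s) d
    rw [hsplit, hsum, ind_coeffsum, hq] at this
    omega
  obtain ⟨c, hc, hcm⟩ := exists_le_sum d (h + 1 - q) (by omega)
  have hcda : ∀ n, c n ≤ a n - ind s n := by
    intro n
    have := hc n
    rw [hd, Finsupp.tsub_apply] at this
    exact this
  set wc := c.sum fun n cc => cc * n with hwc
  set W := (∑ n ∈ s, n) + wc with hW
  set B : ℕ → ℕ →₀ ℕ := fun j => ind (s.erase j) + c with hB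
  have hBle : ∀ j, ∀ n, B j n ≤ a n := by
    intro j n
    simp only [hB, Finsupp.add_apply]
    have h1 := hcda n
    have h2 : ind (s.erase j) n ≤ ind s n := by
      rw [ind_apply, ind_apply]
      by_cases hn : n ∈ s.erase j
      · rw [if_pos hn, if_pos (Finset.mem_of_mem_erase hn)]
      · simp [hn]
    have h3 := hind_le n
    omega
  have hBsum : ∀ j ∈ s, (B j).sum (fun _ cc => cc) = h := by
    intro j hj
    rw [hB]
    rw [coeffsum_add, ind_coeffsum, hcm, Finset.card_erase_of_mem hj, hq]
    omega
  have hBw : ∀ j ∈ s, ((B j).sum fun n cc => cc * n) + j = W := by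
    intro j hj
    rw [hB, wsum_add, ind_wsum, hW, ← hwc]
    rw [← Finset.add_sum_erase s _ hj]
    ring
  set v : ℕ → ℕ := fun j => (B j).sum fun n cc => cc * n with hv
  have hinj : Set.InjOn v s := by
    intro j1 h1 j2 h2 heq
    have e1 := hBw j1 h1
    have e2 := hBw j2 h2
    have hv1 : v j1 = (B j1).sum fun n cc => cc * n := rfl
    have hv2 : v j2 = (B j2).sum fun n cc => cc * n := rfl
    omega
  have hcard : (s.image v).card = q := by
    rw [Finset.card_image_of_injOn hinj, hq]
  rw [← hcard]
  apply final_count hS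
  intro y hy
  obtain ⟨j, hj, rfl⟩ := Finset.mem_image.mp hy
  exact sub_mem_CK hS hx ha (hBle j) (hBsum j hj) (by omega) (by omega)

end Case1
section Case2
variable {S : Set ℕ}

lemma case_big (hS : IsNumSgp S) {k q h x : ℕ} (hx : x ∈ CK S k)
    {a : ℕ →₀ ℕ} (ha : IsMaxRep S x a) (hsum : (a.sum fun _ c => c) = k)
    (hq : a.support.card = q) (h2 : 2 ≤ h) (hhk : h < k)
    (hqh : h + 1 ≤ q) : q ≤ (CK S h).ncard := by
  classical
  set s := a.support with hs
  set l := s.sort (· ≤ ·) with hl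
  have hlen : l.length = q := by rw [hl, Finset.length_sort, hq]
  set m : ℕ → ℕ := fun i => l.getD i 0 with hm
  have hmono : ∀ i j : ℕ, i < j → j < q → m i < m j := by
    intro i j hij hjq
    have hi : i < l.length := by omega
    have hj : j < l.length := by omega
    rw [hm]
    simp only
    rw [List.getD_eq_getElem l 0 hi, List.getD_eq_getElem l 0 hj]
    exact (Finset.sortedLT_sort s) (show (⟨i, hi⟩ : Fin l.length) < ⟨j, hj⟩ from hij)
  have hmem : ∀ i : ℕ, i < q → m i ∈ s := by
    intro i hi
    have hi' : i < l.length := by omega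
    rw [hm]
    simp only
    rw [List.getD_eq_getElem l 0 hi']
    exact (Finset.mem_sort _).mp (List.getElem_mem hi')
  -- index sets
  set g := q - h with hg
  set K : ℕ → Finset ℕ := fun t =>
    if t ≤ g then insert (h - 1 + t) (Finset.range (h - 1))
    else insert (q - 1) ((Finset.range h).erase (h - 1 - (t - g))) with hK
  have hKsub : ∀ t, t < q → K t ⊆ Finset.range q := by
    intro t ht n hn
    rw [hK] at hn
    simp only at hn
    by_cases hc : t ≤ g
    · rw [if_pos hc] at hn
      rcases Finset.mem_insert.mp hn with h1 | h1
      · rw [Finset.mem_range]; omega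
      · rw [Finset.mem_range] at h1 ⊢; omega
    · rw [if_neg hc] at hn
      rcases Finset.mem_insert.mp hn with h1 | h1
      · rw [Finset.mem_range]; omega
      · have := Finset.mem_range.mp (Finset.mem_of_mem_erase h1)
        rw [Finset.mem_range]; omega
  have hKcard : ∀ t, t < q → (K t).card = h := by
    intro t ht
    rw [hK]
    simp only
    by_cases hc : t ≤ g
    · rw [if_pos hc, Finset.card_insert_of_notMem (by rw [Finset.mem_range]; omega),
        Finset.card_range]
      omega
    · rw [if_neg hc, Finset.card_insert_of_notMem
        (fun hmem' => by have := Finset.mem_range.mp (Finset.mem_of_mem_erase hmem'); omega),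
        Finset.card_erase_of_mem (by rw [Finset.mem_range]; omega), Finset.card_range]
      omega
  set σ : ℕ → ℕ := fun t => ∑ i ∈ K t, m i with hσ
  set P := ∑ i ∈ Finset.range (h - 1), m i with hP
  set Q := ∑ i ∈ Finset.range h, m i with hQ
  have hPQ : Q = P + m (h - 1) := by
    rw [hQ, hP]
    conv_lhs => rw [show h = (h - 1) + 1 by omega]
    rw [Finset.sum_range_succ]
  have hσa : ∀ t, t ≤ g → σ t = m (h - 1 + t) + P := by
    intro t ht
    rw [hσ, hK]
    simp only [if_pos ht]
    rw [Finset.sum_insert (by rw [Finset.mem_range]; omega)]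
  have hσb : ∀ t, ¬ t ≤ g → t < q →
      σ t = m (q - 1) + (Q - m (h - 1 - (t - g))) ∧ m (h - 1 - (t - g)) ≤ Q ∧
      h - 1 - (t - g) < h - 1 := by
    intro t ht htq
    have hj : h - 1 - (t - g) < h - 1 := by omega
    have hjr : h - 1 - (t - g) ∈ Finset.range h := by rw [Finset.mem_range]; omega
    have herase := Finset.add_sum_erase (Finset.range h) m hjr
    constructor
    · rw [hσ, hK]
      simp only [if_neg ht]
      rw [Finset.sum_insert (fun hmem' => by
        have := Finset.mem_range.mp (Finset.mem_of_mem_erase hmem'); omega)]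
      rw [hQ]
      omega
    · constructor
      · rw [hQ]; omega
      · exact hj
  have hσmono : ∀ t1 t2, t1 < t2 → t2 < q → σ t1 < σ t2 := by
    intro t1 t2 h12 h2q
    by_cases hc2 : t2 ≤ g
    · rw [hσa t1 (by omega), hσa t2 hc2]
      have := hmono (h - 1 + t1) (h - 1 + t2) (by omega) (by omega)
      omega
    · obtain ⟨e2, hb2, hj2⟩ := hσb t2 hc2 h2q
      have hmj2 : m (h - 1 - (t2 - g)) < m (h - 1) := hmono _ _ hj2 (by omega)
      by_cases hc1 : t1 ≤ g
      · rw [hσa t1 hc1, e2]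
        have h1le : m (h - 1 + t1) ≤ m (q - 1) := by
          rcases Nat.lt_or_ge (h - 1 + t1) (q - 1) with hlt | hge
          · exact le_of_lt (hmono _ _ hlt (by omega))
          · have : h - 1 + t1 = q - 1 := by omega
            rw [this]
        omega
      · obtain ⟨e1, hb1, hj1⟩ := hσb t1 hc1 (by omega)
        rw [e1, e2]
        have := hmono (h - 1 - (t2 - g)) (h - 1 - (t1 - g)) (by omega) (by omega)
        omega
  -- the image sets J t in ℕ
  set J : ℕ → Finset ℕ := fun t => (K t).image m with hJ
  have hminj : ∀ t, t < q → ∀ i ∈ K t, ∀ j ∈ K t, m i = m j → i = j := by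
    intro t ht i hi j hj hij
    have hi' := Finset.mem_range.mp (hKsub t ht hi)
    have hj' := Finset.mem_range.mp (hKsub t ht hj)
    by_contra hne
    rcases Nat.lt_or_ge i j with hlt | hge
    · have := hmono i j hlt hj'; omega
    · have := hmono j i (by omega) hi'; omega
  have hJsum : ∀ t, t < q → ∑ n ∈ J t, n = σ t := by
    intro t ht
    rw [hJ]
    simp only
    rw [Finset.sum_image (hminj t ht)]
  have hJcard : ∀ t, t < q → (J t).card = h := by
    intro t ht
    rw [hJ]
    simp only
    rw [Finset.card_image_of_injOn (fun i hi j hj => hminj t ht i hi j hj), hKcard t ht]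
  have hJs : ∀ t, t < q → J t ⊆ s := by
    intro t ht n hn
    obtain ⟨i, hi, rfl⟩ := Finset.mem_image.mp hn
    exact hmem i (Finset.mem_range.mp (hKsub t ht hi))
  -- each ind (J t) gives an element of CK S h
  have hle : ∀ t, t < q → ∀ n, ind (J t) n ≤ a n := by
    intro t ht n
    rw [ind_apply]
    by_cases hn : n ∈ J t
    · rw [if_pos hn]
      have : n ∈ s := hJs t ht hn
      have := Finsupp.mem_support_iff.mp this
      omega
    · simp [hn]
  have hCK : ∀ t, t < q → σ t ∈ CK S h := by
    intro t ht
    have h1 : ((ind (J t)).sum fun _ c => c) = h := by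
      rw [ind_coeffsum, hJcard t ht]
    have h2 : ((ind (J t)).sum fun n c => c * n) = σ t := by
      rw [ind_wsum, hJsum t ht]
    rw [← h2]
    exact sub_mem_CK hS hx ha (hle t ht) h1 (by omega) (by omega)
  -- count
  have hcard : ((Finset.range q).image σ).card = q := by
    rw [Finset.card_image_of_injOn, Finset.card_range]
    intro t1 h1 t2 h2 heq
    simp only [Finset.coe_range, Set.mem_Iio] at h1 h2
    by_contra hne
    rcases Nat.lt_or_ge t1 t2 with hlt | hge
    · have := hσmono t1 t2 hlt h2; omega
    · have := hσmono t2 t1 (by omega) h1; omega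
  rw [← hcard]
  apply final_count hS
  intro y hy
  obtain ⟨t, ht, rfl⟩ := Finset.mem_image.mp hy
  exact hCK t (Finset.mem_range.mp ht)

end Case2
theorem stmt4 (S : Set ℕ) (hS : IsNumSgp S) (k q : ℕ) (x : ℕ) (hx : x ∈ CK S k)
    (a : ℕ →₀ ℕ) (ha : IsMaxRep S x a) (hae : mult S ∉ a.support)
    (hsum : (a.sum fun _ c => c) = k) (hq : a.support.card = q)
    (h : ℕ) (h2 : 2 ≤ h) (hhk : h < k) :
    (h + 1 ≤ q → q ≤ (CK S h).ncard) ∧ (q ≤ h → q ≤ (CK S h).ncard) := by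
  have hq1 : 1 ≤ q := by
    by_contra hq0
    have hsupp : a.support = ∅ := Finset.card_eq_zero.mp (by omega)
    have ha0 : a = 0 := Finsupp.support_eq_empty.mp hsupp
    rw [ha0] at hsum
    simp [Finsupp.sum] at hsum
    omega
  have main : q ≤ (CK S h).ncard := by
    rcases le_or_gt q (h + 1) with hc | hc
    · exact case_small hS hx ha hsum hq h2 hhk hc hq1
    · exact case_big hS hx ha hsum hq h2 hhk (by omega)
  exact ⟨fun _ => main, fun _ => main⟩
end

section
/- Let S be a numerical semigroup with multiplicity e and k ≥ 2. Let x, y ∈ D_k with ord(x+e) ≥ k+2 and ord(y+e) = h ≤ k+1. Then y + e cannot be induced by a maximal representation of x + e, i.e. there is no s ∈ S with ord(s) ≥ 1 and x + e = (y + e) + s. -/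
open Set

lemma nM_ge_s9 (S : Set ℕ) : ∀ h s, s ∈ nM S h → h ≤ s := by
  intro h
  induction h with
  | zero => intro s hs; simp [nM] at hs; omega
  | succ n ih =>
    intro s hs
    obtain ⟨a, ha, b, hb, rfl⟩ := hs
    have h1 := ih b hb
    have h2 : a ≠ 0 := ha.2
    omega

lemma nM_add_s9 (S : Set ℕ) : ∀ p q a b, a ∈ nM S p → b ∈ nM S q → a + b ∈ nM S (p + q) := by
  intro p
  induction p with
  | zero =>
    intro q a b ha hb
    simp [nM] at ha
    subst ha
    simpa using hb
  | succ n ih =>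
    intro q a b ha hb
    obtain ⟨c, hc, d, hd, rfl⟩ := ha
    have hkey : n + 1 + q = (n + q) + 1 := by omega
    rw [hkey]
    exact ⟨c, hc, d + b, ih q d b hd hb, by omega⟩

lemma bdd_nM (S : Set ℕ) (s : ℕ) : BddAbove {h | s ∈ nM S h} :=
  ⟨s, fun m hm => nM_ge_s9 S m s hm⟩

lemma ordS_le (S : Set ℕ) (s h : ℕ) (hs : s ∈ nM S h) : h ≤ ordS S s :=
  le_csSup (bdd_nM S s) hs

lemma mem_nM_ordS (S : Set ℕ) (s : ℕ) (hpos : 1 ≤ ordS S s) :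
    s ∈ nM S (ordS S s) := by
  have hne : {h | s ∈ nM S h}.Nonempty := by
    by_contra hemp
    rw [Set.not_nonempty_iff_eq_empty] at hemp
    have : ordS S s = 0 := by simp [ordS, hemp]
    omega
  exact Nat.sSup_mem hne (bdd_nM S s)

theorem stmt9 (S : Set ℕ) (hS : IsNumSgp S) (k h : ℕ) (hk : 2 ≤ k)
    (x y : ℕ) (hx : x ∈ DK S k) (hy : y ∈ DK S k)
    (hox : k + 2 ≤ ordS S (x + mult S)) (hoy : ordS S (y + mult S) = h)
    (hh : h ≤ k + 1) :
    ¬ ∃ s ∈ S, 1 ≤ ordS S s ∧ x + mult S = (y + mult S) + s := by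
  rintro ⟨s, hsS, hords, heq⟩
  obtain ⟨hxS, hordx, _⟩ := hx
  obtain ⟨hyS, hordy, _⟩ := hy
  have hxy : x = y + s := by omega
  have hy1 : 1 ≤ ordS S y := by omega
  have hymem : y ∈ nM S (ordS S y) := mem_nM_ordS S y hy1
  have hsmem : s ∈ nM S (ordS S s) := mem_nM_ordS S s hords
  have hxmem : x ∈ nM S (ordS S y + ordS S s) := by
    rw [hxy]; exact nM_add_s9 S _ _ _ _ hymem hsmem
  have := ordS_le S x _ hxmem
  omega
end
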